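/- Let p be a real polynomial of degree d such that |p(j)| ≤ 1 for all integers j in {m, m+1, ..., n} where n - m ≥ k. If p exceeds 1.001 in absolute value somewhere on the real interval [m, n], then d ≥ c·sqrt(k) for an absolute constant c > 0. -/

import Mathlib

open Polynomial Finset Real

namespace MarkovAux
noncomputable section

lemma U_eval_one : ∀ n : ℕ, (Polynomial.Chebyshev.U ℝ (n : ℤ)).eval 1 = n + 1 := by
  intro n
  induction n using Nat.strong_induction_on with
  | _ n ih =>
    match n with
    | 0 => simp [Polynomial.Chebyshev.U_zero]
    | 1 => norm_num [Polynomial.Chebyshev.U_one]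
    | (m+2) =>
      have h : Polynomial.Chebyshev.U ℝ ((m:ℤ)+1+1)
          = 2 * X * Polynomial.Chebyshev.U ℝ ((m:ℤ)+1) - Polynomial.Chebyshev.U ℝ ((m:ℤ)+1-1) := by
        simpa using Polynomial.Chebyshev.U_add_one ℝ ((m:ℤ)+1)
      have h1 := ih (m+1) (by omega)
      have h0 := ih m (by omega)
      have e2 : ((m:ℤ)+1+1) = ((m+2:ℕ) : ℤ) := by push_cast; ring
      have e1 : ((m:ℤ)+1) = ((m+1:ℕ) : ℤ) := by push_cast; ring
      have e0 : ((m+1:ℕ):ℤ)-1 = ((m:ℕ) : ℤ) := by push_cast; ring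
      rw [e2, e1, e0] at h
      rw [h]
      simp only [eval_sub, eval_mul, eval_ofNat, eval_X, h1, h0]
      push_cast
      ring

lemma T_natDegree_le : ∀ n : ℕ, (Polynomial.Chebyshev.T ℝ (n : ℤ)).natDegree ≤ n := by
  intro n
  induction n using Nat.strong_induction_on with
  | _ n ih =>
    match n with
    | 0 => simp [Polynomial.Chebyshev.T_zero]
    | 1 => simp [Polynomial.Chebyshev.T_one]
    | (m+2) =>
      have h : Polynomial.Chebyshev.T ℝ ((m:ℤ)+1+1)
          = 2 * X * Polynomial.Chebyshev.T ℝ ((m:ℤ)+1) - Polynomial.Chebyshev.T ℝ ((m:ℤ)+1-1) := by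
        simpa using Polynomial.Chebyshev.T_add_one ℝ ((m:ℤ)+1)
      have e2 : ((m:ℤ)+1+1) = ((m+2:ℕ) : ℤ) := by push_cast; ring
      have e1 : ((m:ℤ)+1) = ((m+1:ℕ) : ℤ) := by push_cast; ring
      have e0 : ((m+1:ℕ):ℤ)-1 = ((m:ℕ) : ℤ) := by push_cast; ring
      rw [e2, e1, e0] at h
      rw [h]
      refine le_trans (natDegree_sub_le _ _) ?_
      have h1 := ih (m+1) (by omega)
      have h0 := ih m (by omega)
      have : (2 * X * Polynomial.Chebyshev.T ℝ ((m+1:ℕ) : ℤ)).natDegree ≤ m + 2 := by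
        refine le_trans (natDegree_mul_le) ?_
        have : (2 * X : ℝ[X]).natDegree ≤ 1 := by
          refine le_trans (natDegree_mul_le) ?_
          simp
        omega
      omega

lemma T_deriv_one (d : ℕ) (hd : 1 ≤ d) :
    ((Polynomial.Chebyshev.T ℝ (d : ℤ)).derivative).eval 1 = (d : ℝ)^2 := by
  rw [Polynomial.Chebyshev.T_derivative_eq_U]
  have e : ((d:ℤ) - 1) = ((d - 1 : ℕ) : ℤ) := by omega
  rw [e]
  have := U_eval_one (d-1)
  simp only [eval_mul, eval_intCast, this]
  have : ((d:ℝ) - 1 + 1) = d := by ring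
  push_cast
  rw [Nat.cast_sub hd]
  push_cast
  ring



lemma prodlin_nonneg (t : Finset ℕ) (v : ℕ → ℝ) (hv : ∀ m ∈ t, v m ≤ 1) :
    0 ≤ (∏ m ∈ t, (X - C (v m))).eval 1 ∧
      0 ≤ (derivative (∏ m ∈ t, (X - C (v m)))).eval 1 := by
  classical
  induction t using Finset.induction_on with
  | empty => simp
  | insert a t' ha ih =>
    have hv' : ∀ m ∈ t', v m ≤ 1 := fun m hm => hv m (Finset.mem_insert_of_mem hm)
    obtain ⟨h1, h2⟩ := ih hv'
    rw [Finset.prod_insert ha]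
    constructor
    · rw [eval_mul]
      have : (0:ℝ) ≤ (X - C (v a)).eval 1 := by
        simp only [eval_sub, eval_X, eval_C, sub_nonneg]
        exact hv a (Finset.mem_insert_self a t')
      exact mul_nonneg this h1
    · rw [derivative_mul]
      simp only [derivative_sub, derivative_X, derivative_C, sub_zero, eval_add, eval_mul, eval_one,
        one_mul, eval_sub, eval_X, eval_C]
      have hva : (0:ℝ) ≤ 1 - v a := sub_nonneg.mpr (hv a (Finset.mem_insert_self a t'))
      nlinarith [mul_nonneg hva h2]

lemma interp_deriv_eval (s : Finset ℕ) (v : ℕ → ℝ) (r : ℕ → ℝ) :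
    ((Lagrange.interpolate s v r).derivative).eval 1
      = ∑ i ∈ s, r i * ((Lagrange.basis s v i).derivative).eval 1 := by
  rw [Lagrange.interpolate_apply, map_sum derivative]
  rw [eval_finset_sum]
  refine Finset.sum_congr rfl fun i _ => ?_
  rw [derivative_C_mul, eval_mul, eval_C]

lemma core (d : ℕ) (hd : 1 ≤ d) (M : ℝ) (q : ℝ[X]) (hq : q.natDegree ≤ d)
    (hb : ∀ t ∈ Set.Icc (-1:ℝ) 1, |q.eval t| ≤ M) :
    |q.derivative.eval 1| ≤ (d:ℝ)^2 * M := by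
  classical
  have hdR : (0:ℝ) < d := by exact_mod_cast hd
  set η : ℕ → ℝ := fun j => Real.cos (j * π / d) with hη
  set s : Finset ℕ := Finset.range (d+1) with hs
  have hM : 0 ≤ M := le_trans (abs_nonneg _) (hb 1 (by norm_num))
  have hmem : ∀ j : ℕ, j ≤ d → (j * π / d : ℝ) ∈ Set.Icc 0 π := by
    intro j hj
    constructor
    · positivity
    · rw [div_le_iff₀ hdR]
      have : (j:ℝ) ≤ d := by exact_mod_cast hj
      nlinarith [Real.pi_pos]
  have hanti : ∀ i j : ℕ, i ∈ s → j ∈ s → i < j → η j < η i := by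
    intro i j hi hj hij
    simp only [hs, Finset.mem_range] at hi hj
    apply Real.strictAntiOn_cos (hmem i (by omega)) (hmem j (by omega))
    have hij' : (i:ℝ) < j := by exact_mod_cast hij
    have hπ := Real.pi_pos
    gcongr
  have hinj : Set.InjOn η s := by
    intro i hi j hj hij
    rw [Finset.mem_coe] at hi hj
    by_contra hne
    rcases lt_or_gt_of_ne hne with h | h
    · exact absurd hij (ne_of_gt (hanti i j hi hj h))
    · exact absurd hij (ne_of_lt (hanti j i hj hi h))
  have hcard : #s = d + 1 := by simp [hs]
  -- w j : derivative of basis at 1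
  set w : ℕ → ℝ := fun j => ((Lagrange.basis s η j).derivative).eval 1 with hw
  -- sign claim
  have hsign : ∀ j ∈ s, 0 ≤ (-1:ℝ)^j * w j := by
    intro j hj
    have hjd : j ≤ d := by simp only [hs, Finset.mem_range] at hj; omega
    -- decompose basis
    have hbasis : Lagrange.basis s η j
        = C (∏ m ∈ s.erase j, (η j - η m)⁻¹) * ∏ m ∈ s.erase j, (X - C (η m)) := by
      rw [Lagrange.basis, map_prod, ← Finset.prod_mul_distrib]
      exact Finset.prod_congr rfl fun m _ => rfl
    have hwj : w j = (∏ m ∈ s.erase j, (η j - η m)⁻¹)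
        * (derivative (∏ m ∈ s.erase j, (X - C (η m)))).eval 1 := by
      rw [hw]
      simp only
      rw [hbasis, derivative_C_mul, eval_mul, eval_C]
    have hN : 0 ≤ (derivative (∏ m ∈ s.erase j, (X - C (η m)))).eval 1 :=
      (prodlin_nonneg _ _ (fun m _ => Real.cos_le_one _)).2
    -- sign of the coefficient product
    have hsplit : s.erase j = Finset.range j ∪ Finset.Ioo j (d+1) := by
      ext m
      simp only [Finset.mem_erase, hs, Finset.mem_range, Finset.mem_union, Finset.mem_Ioo]
      omega
    have hdisj : Disjoint (Finset.range j) (Finset.Ioo j (d+1)) := by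
      rw [Finset.disjoint_left]
      intro m hm hm'
      simp only [Finset.mem_range] at hm
      simp only [Finset.mem_Ioo] at hm'
      omega
    have hprod : (∏ m ∈ s.erase j, (η j - η m)⁻¹)
        = (∏ m ∈ Finset.range j, (η j - η m)⁻¹) * ∏ m ∈ Finset.Ioo j (d+1), (η j - η m)⁻¹ := by
      rw [hsplit, Finset.prod_union hdisj]
    have hpos2 : 0 < ∏ m ∈ Finset.Ioo j (d+1), (η j - η m)⁻¹ := by
      apply Finset.prod_pos
      intro m hm
      simp only [Finset.mem_Ioo] at hm
      have : η m < η j := hanti j m (by simp [hs]; omega) (by simp [hs]; omega) hm.1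
      have : 0 < η j - η m := by linarith
      positivity
    have hneg1 : (∏ m ∈ Finset.range j, (η j - η m)⁻¹)
        = (-1:ℝ)^j * ∏ m ∈ Finset.range j, (η m - η j)⁻¹ := by
      have : ∀ m ∈ Finset.range j, (η j - η m)⁻¹ = (-1) * (η m - η j)⁻¹ := by
        intro m hm
        rw [neg_one_mul, ← inv_neg]
        ring_nf
      rw [Finset.prod_congr rfl this, Finset.prod_mul_distrib, Finset.prod_const,
        Finset.card_range]
    have hpos1 : 0 < ∏ m ∈ Finset.range j, (η m - η j)⁻¹ := by
      apply Finset.prod_pos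
      intro m hm
      simp only [Finset.mem_range] at hm
      have : η j < η m := hanti m j (by simp [hs]; omega) (by simp [hs]; omega) hm
      have : 0 < η m - η j := by linarith
      positivity
    rw [hwj, hprod, hneg1]
    have hsq : (-1:ℝ)^j * ((-1:ℝ)^j) = 1 := by rw [← mul_pow]; norm_num
    nlinarith [hsq, mul_nonneg (mul_nonneg hpos1.le hpos2.le) hN, hpos1.le, hpos2.le, hN]
  -- Chebyshev sum identity
  have hTsum : ∑ j ∈ s, (-1:ℝ)^j * w j = (d:ℝ)^2 := by
    have hTeval : ∀ j ∈ s, (Polynomial.Chebyshev.T ℝ (d:ℤ)).eval (η j) = (-1:ℝ)^j := by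
      intro j hj
      have : (Polynomial.Chebyshev.T ℝ (d:ℤ)).eval (η j) = Real.cos ((d:ℤ) * (j * π / d)) :=
        Polynomial.Chebyshev.T_real_cos (j * π / d) (d:ℤ)
      rw [this]
      have harg : ((d:ℤ):ℝ) * ((j:ℝ) * π / d) = j * π := by
        push_cast
        field_simp
      rw [harg]
      simpa using Real.cos_nat_mul_pi_sub 0 j
    have hTdeg : (Polynomial.Chebyshev.T ℝ (d:ℤ)).degree < (#s : ℕ) := by
      refine lt_of_le_of_lt (Polynomial.degree_le_natDegree) ?_
      rw [hcard]
      exact_mod_cast Nat.lt_succ_of_le (T_natDegree_le d)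
    have hTinterp := Lagrange.eq_interpolate_of_eval_eq (r := fun j => (-1:ℝ)^j) hinj hTdeg hTeval
    have := congrArg (fun p : ℝ[X] => (derivative p).eval 1) hTinterp
    rw [T_deriv_one d hd] at this
    rw [interp_deriv_eval] at this
    exact this.symm
  -- q interpolation
  have hqdeg : q.degree < (#s : ℕ) := by
    refine lt_of_le_of_lt (Polynomial.degree_le_natDegree) ?_
    rw [hcard]
    exact_mod_cast Nat.lt_succ_of_le hq
  have hqinterp := Lagrange.eq_interpolate hinj hqdeg
  have hqd : q.derivative.eval 1 = ∑ i ∈ s, q.eval (η i) * w i := by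
    conv_lhs => rw [hqinterp]
    rw [interp_deriv_eval]
  rw [hqd]
  calc |∑ i ∈ s, q.eval (η i) * w i| ≤ ∑ i ∈ s, |q.eval (η i) * w i| :=
        Finset.abs_sum_le_sum_abs _ _
    _ ≤ ∑ i ∈ s, M * ((-1:ℝ)^i * w i) := by
        apply Finset.sum_le_sum
        intro i hi
        rw [abs_mul]
        have habsw : |w i| = (-1:ℝ)^i * w i := by
          have h1 : |(-1:ℝ)^i * w i| = (-1:ℝ)^i * w i := abs_of_nonneg (hsign i hi)
          rw [abs_mul, abs_pow, abs_neg, abs_one, one_pow, one_mul] at h1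
          exact h1
        rw [habsw]
        apply mul_le_mul_of_nonneg_right _ (hsign i hi)
        exact hb (η i) ⟨Real.neg_one_le_cos _, Real.cos_le_one _⟩
    _ = M * ∑ i ∈ s, (-1:ℝ)^i * w i := by rw [Finset.mul_sum]
    _ = M * (d:ℝ)^2 := by rw [hTsum]
    _ = (d:ℝ)^2 * M := by ring

/-- Scaled Markov-type derivative bound at any point of the interval. -/
lemma deriv_bound (p : ℝ[X]) (d : ℕ) (hp : p.natDegree ≤ d) (a b M : ℝ) (hab : a < b)
    (hb : ∀ t ∈ Set.Icc a b, |p.eval t| ≤ M) (x : ℝ) (hx : x ∈ Set.Icc a b) :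
    |p.derivative.eval x| ≤ 4 * (d:ℝ)^2 * M / (b - a) := by
  have hM : 0 ≤ M := le_trans (abs_nonneg _) (hb a ⟨le_refl _, hab.le⟩)
  rcases Nat.eq_zero_or_pos d with hd0 | hd1
  · subst hd0
    have : p.natDegree = 0 := le_antisymm hp (Nat.zero_le _)
    obtain ⟨c, rfl⟩ := Polynomial.natDegree_eq_zero.mp this
    simp only [derivative_C, eval_zero, abs_zero]
    have hba : (0:ℝ) < b - a := by linarith
    positivity
  · -- choose affine parameter
    obtain ⟨α, hα0, hαabs, hαmem⟩ :
        ∃ α : ℝ, α ≠ 0 ∧ (b - a)/4 ≤ |α| ∧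
          ∀ t ∈ Set.Icc (-1:ℝ) 1, α * t + (x - α) ∈ Set.Icc a b := by
      rcases le_or_gt ((a+b)/2) x with hmid | hmid
      · refine ⟨(x - a)/2, ?_, ?_, ?_⟩
        · have : a < x := by cases' hx with h1 h2; linarith
          exact ne_of_gt (by linarith)
        · rw [abs_of_nonneg (by cases' hx with h1 h2; linarith)]
          linarith
        · intro t ht
          cases' ht with ht1 ht2
          cases' hx with hx1 hx2
          constructor <;> nlinarith
      · refine ⟨(x - b)/2, ?_, ?_, ?_⟩
        · have : x < b := by linarith
          exact ne_of_lt (by linarith)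
        · rw [abs_of_nonpos (by linarith)]
          linarith
        · intro t ht
          cases' ht with ht1 ht2
          cases' hx with hx1 hx2
          rcases le_or_gt 0 t with ht0 | ht0
          · constructor <;> nlinarith
          · constructor <;> nlinarith
    set β := x - α with hβ
    set q : ℝ[X] := p.comp (C α * X + C β) with hqdef
    have hqdeg : q.natDegree ≤ d := by
      refine le_trans (Polynomial.natDegree_comp_le) ?_
      have : (C α * X + C β).natDegree ≤ 1 := Polynomial.natDegree_linear_le
      calc p.natDegree * (C α * X + C β).natDegree ≤ d * 1 :=
            Nat.mul_le_mul hp this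
        _ = d := by ring
    have hqb : ∀ t ∈ Set.Icc (-1:ℝ) 1, |q.eval t| ≤ M := by
      intro t ht
      rw [hqdef, eval_comp]
      simp only [eval_add, eval_mul, eval_C, eval_X]
      exact hb _ (hαmem t ht)
    have hcore := core d hd1 M q hqdeg hqb
    have hqd : q.derivative.eval 1 = α * p.derivative.eval x := by
      rw [hqdef, Polynomial.derivative_comp]
      simp only [derivative_add, derivative_mul, derivative_C, derivative_X, zero_mul, mul_one,
        zero_add, add_zero, eval_mul, eval_comp, eval_add, eval_C, eval_X]
      rw [hβ]
      ring_nf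
    rw [hqd, abs_mul] at hcore
    have hba : (0:ℝ) < b - a := by linarith
    rw [le_div_iff₀ hba]
    have h1 : |p.derivative.eval x| * (b - a) ≤ |p.derivative.eval x| * (4 * |α|) := by
      apply mul_le_mul_of_nonneg_left (by linarith) (abs_nonneg _)
    nlinarith [h1, hcore]


end
end MarkovAux

/-- Shifted form of the Markov corollary: there is an absolute constant `c > 0` such
that if `p` has degree `d`, `|p(j)| ≤ 1` for all integers `j ∈ {m, …, n}` where
`n - m ≥ k`, and `|p|` exceeds `1.001` somewhere on `[m, n]`, then `d ≥ c·sqrt(k)`. -/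
theorem markov_corollary_shifted :
    ∃ c : ℝ, 0 < c ∧
      ∀ (p : Polynomial ℝ) (d : ℕ) (m n : ℤ) (k : ℕ),
        p.natDegree = d → (k : ℤ) ≤ n - m →
        (∀ j : ℤ, m ≤ j → j ≤ n → |p.eval (j : ℝ)| ≤ 1) →
        (∃ x ∈ Set.Icc (m : ℝ) (n : ℝ), |p.eval x| > 1.001) →
        (d : ℝ) ≥ c * Real.sqrt k := by
  refine ⟨1/100, by norm_num, ?_⟩
  rintro p d m n k hdeg hk hint ⟨x₀, hx₀, hgt⟩
  rcases Nat.eq_zero_or_pos k with hk0 | hk1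
  · subst hk0
    simp only [Nat.cast_zero, Real.sqrt_zero, mul_zero, ge_iff_le]
    positivity
  by_contra hlt
  push_neg at hlt
  have hmn : m < n := by
    have : (1:ℤ) ≤ k := by exact_mod_cast hk1
    omega
  have hmnR : (m:ℝ) < n := by exact_mod_cast hmn
  obtain ⟨y, hy, hymax'⟩ := (isCompact_Icc (a := (m:ℝ)) (b := (n:ℝ))).exists_isMaxOn
    (Set.nonempty_Icc.mpr hmnR.le)
    ((continuous_abs.comp (Polynomial.continuous p)).continuousOn)
  have hymax : ∀ z ∈ Set.Icc (m:ℝ) (n:ℝ), |p.eval z| ≤ |p.eval y| := fun z hz => hymax' hz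
  set M := |p.eval y| with hMdef
  have hM1 : (1.001:ℝ) < M := lt_of_lt_of_le hgt (hymax x₀ hx₀)
  have hM0 : 0 ≤ M := abs_nonneg _
  set j : ℤ := ⌊y⌋ with hj
  have hjm : m ≤ j := Int.le_floor.mpr (by exact_mod_cast hy.1)
  have hjn : j ≤ n := by
    have h2 : (j:ℝ) ≤ (n:ℝ) := (Int.floor_le y).trans hy.2
    exact_mod_cast h2
  have hjmem : (j:ℝ) ∈ Set.Icc (m:ℝ) (n:ℝ) := by
    constructor
    · exact_mod_cast hjm
    · exact_mod_cast hjn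
  have hj1 : |p.eval (j:ℝ)| ≤ 1 := hint j hjm hjn
  set D : ℝ := 4 * (d:ℝ)^2 * M / ((n:ℝ) - m) with hD
  have hder : ∀ t ∈ Set.Icc (m:ℝ) (n:ℝ), |p.derivative.eval t| ≤ D :=
    fun t ht => MarkovAux.deriv_bound p d hdeg.le (m:ℝ) (n:ℝ) M hmnR
      (fun u hu => hymax u hu) t ht
  have hmvt : |p.eval y - p.eval (j:ℝ)| ≤ D * |y - (j:ℝ)| := by
    have := (convex_Icc (m:ℝ) (n:ℝ)).norm_image_sub_le_of_norm_hasDerivWithin_le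
      (f := fun t => p.eval t) (f' := fun t => p.derivative.eval t)
      (fun t _ => (p.hasDerivAt t).hasDerivWithinAt)
      (fun t ht => by rw [Real.norm_eq_abs]; exact hder t ht)
      hjmem hy
    simpa [Real.norm_eq_abs] using this
  have hyj : |y - (j:ℝ)| ≤ 1 := by
    rw [hj, Int.self_sub_floor, Int.abs_fract]
    exact (Int.fract_lt_one y).le
  have hD0 : 0 ≤ D := by
    rw [hD]
    have : (0:ℝ) < (n:ℝ) - m := by linarith
    positivity
  have hMle : M ≤ 1 + D := by
    have h1 : M - |p.eval (j:ℝ)| ≤ |p.eval y - p.eval (j:ℝ)| := by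
      have := abs_sub_abs_le_abs_sub (p.eval y) (p.eval (j:ℝ))
      linarith
    have h2 : D * |y - (j:ℝ)| ≤ D * 1 := mul_le_mul_of_nonneg_left hyj hD0
    linarith
  -- numeric contradiction
  have hkR : (1:ℝ) ≤ k := by exact_mod_cast hk1
  have hKk : (k:ℝ) ≤ (n:ℝ) - m := by
    have : ((k:ℤ):ℝ) ≤ ((n - m : ℤ) : ℝ) := by exact_mod_cast hk
    push_cast at this
    linarith
  have hd2 : (d:ℝ)^2 < (k:ℝ)/10000 := by
    have hd0 : (0:ℝ) ≤ d := Nat.cast_nonneg d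
    have hsq : (Real.sqrt k)^2 = (k:ℝ) := Real.sq_sqrt (by positivity)
    nlinarith [hlt]
  have hDle : D ≤ M / 2500 := by
    rw [hD, div_le_div_iff₀ (by linarith : (0:ℝ) < (n:ℝ) - m) (by norm_num : (0:ℝ) < 2500)]
    have h4 : 4 * (d:ℝ)^2 * M ≤ 4 * ((k:ℝ)/10000) * M := by nlinarith
    nlinarith
  nlinarith
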